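/- Let ψ(φ) = φ − b·sin φ with b = 2 − √2, and let κ(φ) denote the oriented curvature of the centrode X_P(φ) = (ψ'(φ)/(1+ψ'(φ)))·e^{−iφ} (pivot distance a = 1), i.e. κ(φ) = (1+ψ')³·[ψ'(ψ''' − ψ' − ψ'²) − 2ψ''²]/w³ with w = sqrt(ψ''² + ψ'²(1+ψ')²). Then κ(φ) ≤ 0 for all 0 ≤ φ ≤ 2π, with equality exactly at φ = 0 and φ = 2π. -/

import Mathlib

/-- For the transmission function `ψ(φ) = φ − b sin φ` with `b = 2 − √2` and pivot
distance `a = 1`, the oriented curvature of the drive-gear centrode is nonpositive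
on `[0, 2π]`, vanishing exactly at `φ = 0` and `φ = 2π`. -/
theorem centrode_curvature_example
    (b : ℝ) (hb : b = 2 - Real.sqrt 2)
    (ψ' ψ'' ψ''' : ℝ → ℝ)
    (hψ' : ∀ t, ψ' t = 1 - b * Real.cos t)
    (hψ'' : ∀ t, ψ'' t = b * Real.sin t)
    (hψ''' : ∀ t, ψ''' t = b * Real.cos t)
    (w : ℝ → ℝ)
    (hw : ∀ t, w t = Real.sqrt ((ψ'' t) ^ 2 + (ψ' t) ^ 2 * (1 + ψ' t) ^ 2))
    (κ : ℝ → ℝ)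
    (hκ : ∀ t, κ t = (1 + ψ' t) ^ 3 *
      (ψ' t * (ψ''' t - ψ' t - (ψ' t) ^ 2) - 2 * (ψ'' t) ^ 2) / (w t) ^ 3) :
    ∀ φ : ℝ, φ ∈ Set.Icc (0 : ℝ) (2 * Real.pi) →
      κ φ ≤ 0 ∧ (κ φ = 0 ↔ φ = 0 ∨ φ = 2 * Real.pi) := by
  intro φ hφ
  obtain ⟨hφ0, hφ1⟩ := hφ
  set r := Real.sqrt 2 with hr
  have hr2 : r ^ 2 = 2 := Real.sq_sqrt (by norm_num)
  have hrpos : 0 < r := Real.sqrt_pos.mpr (by norm_num)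
  have hrub : r < 1.4143 := by nlinarith
  have hrlb : 1.414 < r := by nlinarith
  set c := Real.cos φ with hc
  set s := Real.sin φ with hs
  have hpy : s ^ 2 + c ^ 2 = 1 := Real.sin_sq_add_cos_sq φ
  have hc1 : c ≤ 1 := Real.cos_le_one φ
  have hcm : -1 ≤ c := Real.neg_one_le_cos φ
  have hψp : ψ' φ = 1 - b * c := hψ' φ
  have hbpos : 0 < b := by rw [hb]; nlinarith
  have hblt : b < 1 := by rw [hb]; nlinarith
  have hψpos : 0 < ψ' φ := by rw [hψp]; nlinarith
  have h1p : 0 < 1 + ψ' φ := by linarith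
  have hwpos : 0 < w φ := by
    rw [hw]
    apply Real.sqrt_pos.mpr
    have h2 : 0 < (ψ' φ) ^ 2 * (1 + ψ' φ) ^ 2 :=
      mul_pos (pow_pos hψpos 2) (pow_pos h1p 2)
    nlinarith [sq_nonneg (ψ'' φ)]
  -- the quadratic factor is positive
  have hA : 0 < 20 - 14 * r := by nlinarith
  have hQ : 0 < (20 - 14 * r) * c ^ 2 + (2 - 2 * r) * c + (14 - 8 * r) := by
    nlinarith [sq_nonneg (2 * (20 - 14 * r) * c + (2 - 2 * r)), sq_nonneg c]
  -- key factorization of the numerator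
  have hN : ψ' φ * (ψ''' φ - ψ' φ - (ψ' φ) ^ 2) - 2 * (ψ'' φ) ^ 2 =
      (c - 1) * ((20 - 14 * r) * c ^ 2 + (2 - 2 * r) * c + (14 - 8 * r)) := by
    rw [hψ' φ, hψ'' φ, hψ''' φ, hb]
    linear_combination (-2 * (2 - r) ^ 2) * hpy +
      ((6 - r) * c ^ 3 - 3 * c ^ 2 - 2) * hr2
  have hκφ : κ φ = (1 + ψ' φ) ^ 3 *
      ((c - 1) * ((20 - 14 * r) * c ^ 2 + (2 - 2 * r) * c + (14 - 8 * r))) / (w φ) ^ 3 := by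
    rw [hκ φ, hN]
  have hwp3 : 0 < (w φ) ^ 3 := pow_pos hwpos 3
  have h1p3 : 0 < (1 + ψ' φ) ^ 3 := pow_pos h1p 3
  constructor
  · rw [hκφ]
    apply div_nonpos_of_nonpos_of_nonneg _ hwp3.le
    have : (c - 1) * ((20 - 14 * r) * c ^ 2 + (2 - 2 * r) * c + (14 - 8 * r)) ≤ 0 :=
      mul_nonpos_of_nonpos_of_nonneg (by linarith) hQ.le
    exact mul_nonpos_of_nonneg_of_nonpos h1p3.le this
  · constructor
    · intro h
      rw [hκφ] at h
      have hnum : (1 + ψ' φ) ^ 3 *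
          ((c - 1) * ((20 - 14 * r) * c ^ 2 + (2 - 2 * r) * c + (14 - 8 * r))) = 0 := by
        field_simp at h
        linear_combination h
      have hc1' : c - 1 = 0 := by
        rcases mul_eq_zero.mp hnum with h' | h'
        · exact absurd h' h1p3.ne'
        · rcases mul_eq_zero.mp h' with h'' | h''
          · exact h''
          · exact absurd h'' hQ.ne'
      have hcos1 : Real.cos φ = 1 := by rw [← hc]; linarith
      rcases lt_or_eq_of_le hφ1 with hlt | heq
      · left
        have := (Real.cos_eq_one_iff_of_lt_of_lt
          (by linarith [Real.pi_pos] : -(2 * Real.pi) < φ) hlt).mp hcos1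
        exact this
      · right; exact heq
    · intro h
      rcases h with h | h
      · rw [hκφ]
        have : c = 1 := by rw [hc, h, Real.cos_zero]
        rw [this]
        ring
      · rw [hκφ]
        have : c = 1 := by rw [hc, h, Real.cos_two_pi]
        rw [this]
        ring
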